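/- Let (A,B) be structurally controllable with all state vertices input-reachable in D(A,B). Augment D(A,B) with a virtual source ū and unit-capacity edges; edges of D(A,B) get capacity 1 and the edge (ū, u_i) gets capacity equal to the out-degree of u_i. Then the minimum number of edges of D(A,B) whose deletion destroys input-reachability of some state vertex equals min over state vertices x_i of the minimum ū–x_i edge cut in the augmented digraph. -/

import Mathlib

/-- Adjacency of the system digraph `D(A,B)`. -/
def sysAdj {n q : ℕ} (EA : Finset (Fin n × Fin n)) (EB : Finset (Fin q × Fin n)) :
    (Fin q ⊕ Fin n) → (Fin q ⊕ Fin n) → Prop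
  | Sum.inl u, Sum.inr x => (u, x) ∈ EB
  | Sum.inr x, Sum.inr y => (x, y) ∈ EA
  | _, _ => False

/-- Every state vertex is reachable from some input vertex in `D(A,B)`. -/
def InputReachable {n q : ℕ} (EA : Finset (Fin n × Fin n))
    (EB : Finset (Fin q × Fin n)) : Prop :=
  ∀ x : Fin n, ∃ u : Fin q,
    Relation.ReflTransGen (sysAdj EA EB) (Sum.inl u) (Sum.inr x)

/-- The augmented digraph `D(A,B,ū)`, where the virtual source `ū` is `none`
and has an edge to every input vertex. -/
def augEdges {n q : ℕ} (EA : Finset (Fin n × Fin n)) (EB : Finset (Fin q × Fin n)) :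
    Finset (Option (Fin q ⊕ Fin n) × Option (Fin q ⊕ Fin n)) :=
  (EB.image fun e => ((some (Sum.inl e.1) : Option (Fin q ⊕ Fin n)), some (Sum.inr e.2)))
    ∪ (EA.image fun e => ((some (Sum.inr e.1) : Option (Fin q ⊕ Fin n)), some (Sum.inr e.2)))
    ∪ (Finset.univ.image fun u : Fin q => ((none : Option (Fin q ⊕ Fin n)), some (Sum.inl u)))

/-- Capacities on the augmented digraph: every original edge has capacity `1`,
and the edge `(ū, u_i)` has capacity equal to the out-degree of `u_i`. -/
def augCap {n q : ℕ} (EB : Finset (Fin q × Fin n)) :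
    Option (Fin q ⊕ Fin n) × Option (Fin q ⊕ Fin n) → ℕ
  | (none, some (Sum.inl u)) => (EB.filter fun p => p.1 = u).card
  | _ => 1

open Finset Relation Sum

lemma aug_mem {n q : ℕ} {EA : Finset (Fin n × Fin n)} {EB : Finset (Fin q × Fin n)}
    {p : Option (Fin q ⊕ Fin n) × Option (Fin q ⊕ Fin n)} :
    p ∈ augEdges EA EB ↔
      (∃ e ∈ EB, (((some (inl e.1), some (inr e.2))) : Option (Fin q ⊕ Fin n) × Option (Fin q ⊕ Fin n)) = p) ∨
      (∃ e ∈ EA, (((some (inr e.1), some (inr e.2))) : Option (Fin q ⊕ Fin n) × Option (Fin q ⊕ Fin n)) = p) ∨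
      (∃ u : Fin q, ((none : Option (Fin q ⊕ Fin n)), some (inl u)) = p) := by
  simp [augEdges, Finset.mem_union, Finset.mem_image, or_assoc]

lemma cap_some {n q : ℕ} (EB : Finset (Fin q × Fin n)) (w : Fin q ⊕ Fin n)
    (b : Option (Fin q ⊕ Fin n)) : augCap EB (some w, b) = 1 := rfl

lemma fB_inj {n q : ℕ} : Function.Injective
    (fun e : Fin q × Fin n => (((some (inl e.1), some (inr e.2))) : Option (Fin q ⊕ Fin n) × Option (Fin q ⊕ Fin n))) := by
  intro a b h
  simp only [Prod.mk.injEq, Option.some.injEq, inl.injEq, inr.injEq] at h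
  exact Prod.ext h.1 h.2

lemma fA_inj {n q : ℕ} : Function.Injective
    (fun e : Fin n × Fin n => (((some (inr e.1), some (inr e.2))) : Option (Fin q ⊕ Fin n) × Option (Fin q ⊕ Fin n))) := by
  intro a b h
  simp only [Prod.mk.injEq, Option.some.injEq, inr.injEq] at h
  exact Prod.ext h.1 h.2

lemma L1 {n q : ℕ} {EA : Finset (Fin n × Fin n)} {EB : Finset (Fin q × Fin n)}
    (FA : Finset (Fin n × Fin n)) (hFA : FA ⊆ EA)
    (FB : Finset (Fin q × Fin n)) (hFB : FB ⊆ EB) (x : Fin n)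
    (hx : ∀ u : Fin q, ¬ ReflTransGen (sysAdj (EA \ FA) (EB \ FB)) (inl u) (inr x)) :
    ∃ F ⊆ augEdges EA EB,
      (¬ ReflTransGen (fun a b => (a, b) ∈ augEdges EA EB \ F) none (some (inr x))) ∧
      FA.card + FB.card = ∑ e ∈ F, augCap EB e := by
  classical
  set F := (FB.image fun e => (((some (inl e.1), some (inr e.2))) : Option (Fin q ⊕ Fin n) × Option (Fin q ⊕ Fin n)))
        ∪ (FA.image fun e => (((some (inr e.1), some (inr e.2))) : Option (Fin q ⊕ Fin n) × Option (Fin q ⊕ Fin n)))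
    with hFdef
  have hFsub : F ⊆ augEdges EA EB := by
    refine Finset.union_subset ?_ ?_
    · exact (Finset.image_subset_image hFB).trans
        (Finset.subset_union_left.trans Finset.subset_union_left)
    · exact (Finset.image_subset_image hFA).trans
        (Finset.subset_union_right.trans Finset.subset_union_left)
  refine ⟨F, hFsub, ?_, ?_⟩
  · -- no path from none to x in augEdges \ F
    intro hpath
    rcases hpath.cases_head with h | ⟨b, hb, hrest⟩
    · exact nomatch h
    · have hb' := (Finset.mem_sdiff.mp hb).1
      rcases aug_mem.mp hb' with ⟨e, _, he⟩ | ⟨e, _, he⟩ | ⟨u, hu⟩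
      · simpa using congrArg Prod.fst he
      · simpa using congrArg Prod.fst he
      · -- b = some (inl u)
        have hbval : b = some (inl u) := (congrArg Prod.snd hu).symm
        subst hbval
        -- project the path
        have key : ∀ v, ReflTransGen (fun a b => (a, b) ∈ augEdges EA EB \ F) v (some (inr x)) →
            ∀ c : Fin q ⊕ Fin n, v = some c →
            ReflTransGen (sysAdj (EA \ FA) (EB \ FB)) c (inr x) := by
          intro v hv
          induction hv using Relation.ReflTransGen.head_induction_on with
          | refl => intro c hc; cases hc; exact .refl
          | head hstep _ ih =>
            intro c hc
            subst hc
            have hmem := (Finset.mem_sdiff.mp hstep).1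
            have hnF := (Finset.mem_sdiff.mp hstep).2
            rcases aug_mem.mp hmem with ⟨e, heB, he⟩ | ⟨e, heA, he⟩ | ⟨u', hu'⟩
            · have h1 : some (inl e.1) = some c := congrArg Prod.fst he
              have h2 : c = inl e.1 := (Option.some.inj h1).symm
              subst h2
              have hnFB : e ∉ FB := by
                intro hcon
                exact hnF (he ▸ Finset.mem_union_left _ (Finset.mem_image_of_mem _ hcon))
              have hstep' : sysAdj (EA \ FA) (EB \ FB) (inl e.1) (inr e.2) := by
                show (e.1, e.2) ∈ EB \ FB
                exact Finset.mem_sdiff.mpr ⟨heB, hnFB⟩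
              exact ReflTransGen.head hstep' (ih (inr e.2) (congrArg Prod.snd he).symm)
            · have h1 : some (inr e.1) = some c := congrArg Prod.fst he
              have h2 : c = inr e.1 := (Option.some.inj h1).symm
              subst h2
              have hnFA : e ∉ FA := by
                intro hcon
                exact hnF (he ▸ Finset.mem_union_right _ (Finset.mem_image_of_mem _ hcon))
              have hstep' : sysAdj (EA \ FA) (EB \ FB) (inr e.1) (inr e.2) := by
                show (e.1, e.2) ∈ EA \ FA
                exact Finset.mem_sdiff.mpr ⟨heA, hnFA⟩
              exact ReflTransGen.head hstep' (ih (inr e.2) (congrArg Prod.snd he).symm)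
            · simpa using congrArg Prod.fst hu'
        exact hx u (key _ hrest (inl u) rfl)
  · -- cardinality
    have hsum1 : ∀ e ∈ F, augCap EB e = 1 := by
      intro e he
      rcases aug_mem.mp (hFsub he) with ⟨e', _, he'⟩ | ⟨e', _, he'⟩ | ⟨u, hu⟩
      · rw [← he']; exact cap_some _ _ _
      · rw [← he']; exact cap_some _ _ _
      · exfalso
        rw [← hu] at he
        rcases Finset.mem_union.mp he with h | h <;>
          · obtain ⟨a, _, ha⟩ := Finset.mem_image.mp h
            simpa using congrArg Prod.fst ha
    have hdisj : Disjoint (FB.image fun e => (((some (inl e.1), some (inr e.2))) : Option (Fin q ⊕ Fin n) × Option (Fin q ⊕ Fin n)))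
        (FA.image fun e => (((some (inr e.1), some (inr e.2))) : Option (Fin q ⊕ Fin n) × Option (Fin q ⊕ Fin n))) := by
      rw [Finset.disjoint_left]
      intro p hp1 hp2
      obtain ⟨a, _, ha⟩ := Finset.mem_image.mp hp1
      obtain ⟨b, _, hb⟩ := Finset.mem_image.mp hp2
      rw [← ha] at hb
      have := congrArg Prod.fst hb
      simp at this
    calc FA.card + FB.card
        = FB.card + FA.card := Nat.add_comm _ _
      _ = F.card := by
          rw [hFdef, Finset.card_union_of_disjoint hdisj,
            Finset.card_image_of_injective _ fB_inj, Finset.card_image_of_injective _ fA_inj]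
      _ = ∑ e ∈ F, 1 := by simp
      _ = ∑ e ∈ F, augCap EB e := (Finset.sum_congr rfl hsum1).symm

lemma L2 {n q : ℕ} {EA : Finset (Fin n × Fin n)} {EB : Finset (Fin q × Fin n)}
    (F : Finset (Option (Fin q ⊕ Fin n) × Option (Fin q ⊕ Fin n))) (hF : F ⊆ augEdges EA EB)
    (x : Fin n)
    (hx : ¬ ReflTransGen (fun a b => (a, b) ∈ augEdges EA EB \ F) none (some (inr x))) :
    ∃ FA ⊆ EA, ∃ FB ⊆ EB,
      (∀ u : Fin q, ¬ ReflTransGen (sysAdj (EA \ FA) (EB \ FB)) (inl u) (inr x)) ∧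
      FA.card + FB.card ≤ ∑ e ∈ F, augCap EB e := by
  classical
  set FA := EA.filter (fun e =>
    (((some (inr e.1), some (inr e.2))) : Option (Fin q ⊕ Fin n) × Option (Fin q ⊕ Fin n)) ∈ F)
    with hFAdef
  set FB := EB.filter (fun e =>
    (((some (inl e.1), some (inr e.2))) : Option (Fin q ⊕ Fin n) × Option (Fin q ⊕ Fin n)) ∈ F ∨
    (((none, some (inl e.1))) : Option (Fin q ⊕ Fin n) × Option (Fin q ⊕ Fin n)) ∈ F)
    with hFBdef
  refine ⟨FA, Finset.filter_subset _ _, FB, Finset.filter_subset _ _, ?_, ?_⟩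
  · -- non-reachability of x
    intro u hu
    apply hx
    -- first step of hu gives that the (none, inl u) edge is not in F
    have hfirst : (((none, some (inl u))) : Option (Fin q ⊕ Fin n) × Option (Fin q ⊕ Fin n)) ∉ F := by
      rcases hu.cases_head with h | ⟨b, hb, _⟩
      · exact absurd h (by simp)
      · cases b with
        | inl v => exact absurd hb (by simp [sysAdj])
        | inr y =>
          have hy : (u, y) ∈ EB \ FB := hb
          have := (Finset.mem_sdiff.mp hy).2
          intro hcon
          exact this (Finset.mem_filter.mpr ⟨(Finset.mem_sdiff.mp hy).1, Or.inr hcon⟩)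
    have hlift : ReflTransGen (fun a b => (a, b) ∈ augEdges EA EB \ F)
        (some (inl u)) (some (inr x)) := by
      refine Relation.ReflTransGen.lift some ?_ _ _ hu
      intro a b hab
      cases a with
      | inl u' =>
        cases b with
        | inl v => exact absurd hab (by simp [sysAdj])
        | inr y =>
          have hy : (u', y) ∈ EB \ FB := hab
          have h1 := (Finset.mem_sdiff.mp hy).1
          have h2 := (Finset.mem_sdiff.mp hy).2
          refine Finset.mem_sdiff.mpr ⟨?_, ?_⟩
          · exact aug_mem.mpr (Or.inl ⟨(u', y), h1, rfl⟩)
          · intro hcon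
            exact h2 (Finset.mem_filter.mpr ⟨h1, Or.inl hcon⟩)
      | inr z =>
        cases b with
        | inl v => exact absurd hab (by simp [sysAdj])
        | inr y =>
          have hy : (z, y) ∈ EA \ FA := hab
          have h1 := (Finset.mem_sdiff.mp hy).1
          have h2 := (Finset.mem_sdiff.mp hy).2
          refine Finset.mem_sdiff.mpr ⟨?_, ?_⟩
          · exact aug_mem.mpr (Or.inr (Or.inl ⟨(z, y), h1, rfl⟩))
          · intro hcon
            exact h2 (Finset.mem_filter.mpr ⟨h1, hcon⟩)
    exact ReflTransGen.head
      (Finset.mem_sdiff.mpr ⟨aug_mem.mpr (Or.inr (Or.inr ⟨u, rfl⟩)), hfirst⟩) hlift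
  · -- cardinality bound
    set P : Option (Fin q ⊕ Fin n) × Option (Fin q ⊕ Fin n) → Prop := fun p => p.1 = none
      with hPdef
    have hsplit : ∑ e ∈ F, augCap EB e
        = ∑ e ∈ F.filter P, augCap EB e + ∑ e ∈ F.filter (fun p => ¬ P p), augCap EB e :=
      (Finset.sum_filter_add_sum_filter_not F P _).symm
    -- the non-none part: each capacity is 1
    have hnone : ∑ e ∈ F.filter (fun p => ¬ P p), augCap EB e
        = (F.filter (fun p => ¬ P p)).card := by
      rw [Finset.card_eq_sum_ones]
      refine Finset.sum_congr rfl ?_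
      intro p hp
      obtain ⟨hpF, hpne⟩ := Finset.mem_filter.mp hp
      obtain ⟨a, ha⟩ := Option.ne_none_iff_exists.mp hpne
      have : p = (some a, p.2) := by rw [ha]
      rw [this]; exact cap_some _ _ _
    set FB1 := EB.filter (fun e =>
      (((some (inl e.1), some (inr e.2))) : Option (Fin q ⊕ Fin n) × Option (Fin q ⊕ Fin n)) ∈ F)
    set FB2 := EB.filter (fun e =>
      (((none, some (inl e.1))) : Option (Fin q ⊕ Fin n) × Option (Fin q ⊕ Fin n)) ∈ F)
    have hFBle : FB.card ≤ FB1.card + FB2.card := by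
      rw [hFBdef, Finset.filter_or]
      exact Finset.card_union_le _ _
    -- FA and FB1 inject into the non-none part
    have hA : FA.card + FB1.card ≤ (F.filter (fun p => ¬ P p)).card := by
      have hdisj : Disjoint
          (FA.image fun e => (((some (inr e.1), some (inr e.2))) : Option (Fin q ⊕ Fin n) × Option (Fin q ⊕ Fin n)))
          (FB1.image fun e => (((some (inl e.1), some (inr e.2))) : Option (Fin q ⊕ Fin n) × Option (Fin q ⊕ Fin n))) := by
        rw [Finset.disjoint_left]
        intro p hp1 hp2
        obtain ⟨a, _, ha⟩ := Finset.mem_image.mp hp1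
        obtain ⟨b, _, hb⟩ := Finset.mem_image.mp hp2
        rw [← ha] at hb
        have := congrArg Prod.fst hb
        simp at this
      have hsub : (FA.image fun e => (((some (inr e.1), some (inr e.2))) : Option (Fin q ⊕ Fin n) × Option (Fin q ⊕ Fin n)))
          ∪ (FB1.image fun e => (((some (inl e.1), some (inr e.2))) : Option (Fin q ⊕ Fin n) × Option (Fin q ⊕ Fin n)))
          ⊆ F.filter (fun p => ¬ P p) := by
        intro p hp
        rcases Finset.mem_union.mp hp with h | h <;>
          obtain ⟨a, ha1, ha2⟩ := Finset.mem_image.mp h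
        · exact Finset.mem_filter.mpr ⟨ha2 ▸ (Finset.mem_filter.mp ha1).2, by
            rw [← ha2]; simp [hPdef]⟩
        · exact Finset.mem_filter.mpr ⟨ha2 ▸ (Finset.mem_filter.mp ha1).2, by
            rw [← ha2]; simp [hPdef]⟩
      calc FA.card + FB1.card
          = ((FA.image fun e => (((some (inr e.1), some (inr e.2))) : Option (Fin q ⊕ Fin n) × Option (Fin q ⊕ Fin n)))
            ∪ (FB1.image fun e => (((some (inl e.1), some (inr e.2))) : Option (Fin q ⊕ Fin n) × Option (Fin q ⊕ Fin n)))).card := by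
            rw [Finset.card_union_of_disjoint hdisj,
              Finset.card_image_of_injective _ fA_inj, Finset.card_image_of_injective _ fB_inj]
        _ ≤ _ := Finset.card_le_card hsub
    -- FB2 is bounded by the none-part capacities
    have hB : FB2.card ≤ ∑ e ∈ F.filter P, augCap EB e := by
      have hsub : FB2 ⊆ (F.filter P).biUnion (fun p =>
          EB.filter (fun e =>
            (((none, some (inl e.1))) : Option (Fin q ⊕ Fin n) × Option (Fin q ⊕ Fin n)) = p)) := by
        intro e he
        obtain ⟨heB, heF⟩ := Finset.mem_filter.mp he
        refine Finset.mem_biUnion.mpr ⟨_, Finset.mem_filter.mpr ⟨heF, rfl⟩,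
          Finset.mem_filter.mpr ⟨heB, rfl⟩⟩
      calc FB2.card ≤ ((F.filter P).biUnion _).card := Finset.card_le_card hsub
        _ ≤ ∑ p ∈ F.filter P, (EB.filter (fun e =>
            (((none, some (inl e.1))) : Option (Fin q ⊕ Fin n) × Option (Fin q ⊕ Fin n)) = p)).card :=
          Finset.card_biUnion_le
        _ ≤ ∑ p ∈ F.filter P, augCap EB p := by
          refine Finset.sum_le_sum ?_
          intro p hp
          obtain ⟨hpF, hpnone⟩ := Finset.mem_filter.mp hp
          rcases aug_mem.mp (hF hpF) with ⟨e, _, he⟩ | ⟨e, _, he⟩ | ⟨u, hu⟩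
          · exfalso; rw [← he] at hpnone; simp [hPdef] at hpnone
          · exfalso; rw [← he] at hpnone; simp [hPdef] at hpnone
          · rw [← hu]
            have : (EB.filter (fun e =>
                (((none, some (inl e.1))) : Option (Fin q ⊕ Fin n) × Option (Fin q ⊕ Fin n))
                  = (none, some (inl u))))
                = EB.filter (fun e => e.1 = u) := by
              refine Finset.filter_congr ?_
              intro e _
              constructor
              · intro h
                have := congrArg Prod.snd h
                simpa using this
              · intro h; rw [h]
            rw [this]
            exact le_of_eq rfl
    omega

/-- The minimum number of edges of `D(A,B)` whose deletion destroys
input-reachability of some state vertex equals the minimum over state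
vertices `x` of the minimum capacity of a `ū`–`x` edge cut in the augmented
digraph. -/
theorem stmt5 {n q : ℕ} (EA : Finset (Fin n × Fin n)) (EB : Finset (Fin q × Fin n))
    (hreach : InputReachable EA EB) :
    sInf {k : ℕ | ∃ FA ⊆ EA, ∃ FB ⊆ EB,
        ¬ InputReachable (EA \ FA) (EB \ FB) ∧ k = FA.card + FB.card}
      = sInf {k : ℕ | ∃ x : Fin n,
          k = sInf {v : ℕ | ∃ F ⊆ augEdges EA EB,
            (¬ Relation.ReflTransGen
                (fun a b => (a, b) ∈ augEdges EA EB \ F)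
                none (some (Sum.inr x))) ∧
            v = ∑ e ∈ F, augCap EB e}} := by
  classical
  rcases isEmpty_or_nonempty (Fin n) with hE | hNE
  · -- trivial case: no state vertices
    have h1 : {k : ℕ | ∃ FA ⊆ EA, ∃ FB ⊆ EB,
        ¬ InputReachable (EA \ FA) (EB \ FB) ∧ k = FA.card + FB.card} = ∅ := by
      ext k
      simp only [Set.mem_setOf_eq, Set.mem_empty_iff_false, iff_false]
      rintro ⟨FA, _, FB, _, hIR, _⟩
      exact hIR (fun x => (hE.false x).elim)
    have h2 : {k : ℕ | ∃ x : Fin n,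
          k = sInf {v : ℕ | ∃ F ⊆ augEdges EA EB,
            (¬ Relation.ReflTransGen
                (fun a b => (a, b) ∈ augEdges EA EB \ F)
                none (some (Sum.inr x))) ∧
            v = ∑ e ∈ F, augCap EB e}} = ∅ := by
      ext k
      simp only [Set.mem_setOf_eq, Set.mem_empty_iff_false, iff_false]
      rintro ⟨x, _⟩
      exact hE.false x
    rw [h1, h2]
  · obtain ⟨x0⟩ := hNE
    -- the cut set for each x is nonempty (take F = all edges)
    have hVne : ∀ x : Fin n, {v : ℕ | ∃ F ⊆ augEdges EA EB,
        (¬ Relation.ReflTransGen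
            (fun a b => (a, b) ∈ augEdges EA EB \ F)
            none (some (Sum.inr x))) ∧
        v = ∑ e ∈ F, augCap EB e}.Nonempty := by
      intro x
      refine ⟨_, augEdges EA EB, Finset.Subset.refl _, ?_, rfl⟩
      intro hpath
      rcases hpath.cases_head with h | ⟨b, hb, _⟩
      · exact nomatch h
      · simp at hb
    -- the deletion set is nonempty (delete everything)
    have hSne : ∃ k, k ∈ {k : ℕ | ∃ FA ⊆ EA, ∃ FB ⊆ EB,
        ¬ InputReachable (EA \ FA) (EB \ FB) ∧ k = FA.card + FB.card} := by
      refine ⟨EA.card + EB.card, EA, Finset.Subset.refl _, EB, Finset.Subset.refl _, ?_, rfl⟩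
      intro hIR
      obtain ⟨u, hp⟩ := hIR x0
      rcases hp.cases_head with h | ⟨b, hb, _⟩
      · exact nomatch h
      · cases b with
        | inl v => exact hb
        | inr y =>
          have : (u, y) ∈ EB \ EB := hb
          simp at this
    refine le_antisymm ?_ ?_
    · -- LHS ≤ RHS
      refine le_csInf ⟨_, x0, rfl⟩ ?_
      rintro b ⟨x, rfl⟩
      obtain ⟨F, hFsub, hFcut, hFval⟩ := Nat.sInf_mem (hVne x)
      obtain ⟨FA, hFA, FB, hFB, hnr, hcard⟩ := L2 F hFsub x hFcut
      have hmem : FA.card + FB.card ∈ {k : ℕ | ∃ FA ⊆ EA, ∃ FB ⊆ EB,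
          ¬ InputReachable (EA \ FA) (EB \ FB) ∧ k = FA.card + FB.card} := by
        refine ⟨FA, hFA, FB, hFB, ?_, rfl⟩
        intro hIR
        obtain ⟨u, hp⟩ := hIR x
        exact hnr u hp
      exact le_trans (Nat.sInf_le hmem) (hcard.trans (le_of_eq hFval.symm))
    · -- RHS ≤ LHS
      obtain ⟨k0, hk0⟩ := hSne
      obtain ⟨FA, hFA, FB, hFB, hnIR, hkval⟩ := Nat.sInf_mem ⟨k0, hk0⟩
      have hnIR' : ∃ x : Fin n, ∀ u : Fin q,
          ¬ Relation.ReflTransGen (sysAdj (EA \ FA) (EB \ FB)) (Sum.inl u) (Sum.inr x) := by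
        unfold InputReachable at hnIR
        push_neg at hnIR
        exact hnIR
      obtain ⟨x, hx⟩ := hnIR'
      obtain ⟨F, hFsub, hFcut, hFval⟩ := L1 FA hFA FB hFB x hx
      have h1 : sInf {v : ℕ | ∃ F ⊆ augEdges EA EB,
          (¬ Relation.ReflTransGen
              (fun a b => (a, b) ∈ augEdges EA EB \ F)
              none (some (Sum.inr x))) ∧
          v = ∑ e ∈ F, augCap EB e} ≤ FA.card + FB.card := by
        refine Nat.sInf_le ?_
        exact ⟨F, hFsub, hFcut, hFval⟩
      refine le_trans (Nat.sInf_le ⟨x, rfl⟩) (h1.trans (le_of_eq hkval.symm))
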